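/- Let α ∈ (0,1)∪(1,4) and set d₁ = (−3α + √(3α(4−α)))/(2(1−α)) and d₂ = (−3α − √(3α(4−α)))/(2(1−α)). Suppose both d₁ and d₂ are of type (K, ν) for some K, ν > 0. Then there exists a constant C > 0, depending only on α, K, and ν, such that for all integers n, n₁, n₂ with n = n₁ + n₂, n ≠ 0, and n₁ ≠ 0, one has |α n³ − n₁³ − α n₂³| ≥ C |n₁| |n|^{−ν}. -/

import Mathlib

/-- A real number `ρ` is of type `(K, ν)` if `|ρ - m/q| ≥ K / |q|^(2+ν)`
for all integers `m` and all nonzero integers `q`. -/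
def IsOfType (ρ K ν : ℝ) : Prop :=
  ∀ m q : ℤ, q ≠ 0 → K / |(q : ℝ)| ^ (2 + ν) ≤ |ρ - (m : ℝ) / (q : ℝ)|

theorem stmt_7 (α : ℝ) (hα : 0 < α) (hα4 : α < 4) (hα1 : α ≠ 1)
    (d₁ d₂ : ℝ)
    (hd₁ : d₁ = (-3 * α + Real.sqrt (3 * α * (4 - α))) / (2 * (1 - α)))
    (hd₂ : d₂ = (-3 * α - Real.sqrt (3 * α * (4 - α))) / (2 * (1 - α)))
    (K ν : ℝ) (hK : 0 < K) (hν : 0 < ν)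
    (htype₁ : IsOfType d₁ K ν) (htype₂ : IsOfType d₂ K ν) :
    ∃ C > 0, ∀ n n₁ n₂ : ℤ, n = n₁ + n₂ → n ≠ 0 → n₁ ≠ 0 →
      C * |(n₁ : ℝ)| * |(n : ℝ)| ^ (-ν) ≤
        |α * (n : ℝ) ^ 3 - (n₁ : ℝ) ^ 3 - α * (n₂ : ℝ) ^ 3| := by
  have h1a : (1:ℝ) - α ≠ 0 := by intro h; apply hα1; linarith
  have hpos : 0 < 3 * α * (4 - α) := by nlinarith
  have hs2 : Real.sqrt (3 * α * (4 - α)) ^ 2 = 3 * α * (4 - α) :=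
    Real.sq_sqrt hpos.le
  have hspos : 0 < Real.sqrt (3 * α * (4 - α)) := Real.sqrt_pos.mpr hpos
  set s := Real.sqrt (3 * α * (4 - α)) with hsdef
  have hsum2 : (1 - α) * (d₁ + d₂) = -3 * α := by
    rw [hd₁, hd₂]; field_simp; ring
  have hprod : (1 - α) ^ 2 * (d₁ * d₂) = 3 * α * (α - 1) := by
    rw [hd₁, hd₂]; field_simp; linear_combination (-1) * hs2
  have hprodb : (1 - α) * (d₁ * d₂) = -3 * α := by
    apply mul_left_cancel₀ h1a
    linear_combination hprod
  have hDval : d₁ - d₂ = s / (1 - α) := by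
    rw [hd₁, hd₂]; field_simp; ring
  set D := |d₁ - d₂| with hD
  have hDpos : 0 < D := by
    rw [hD, hDval]; exact abs_pos.mpr (div_ne_zero hspos.ne' h1a)
  have h1apos : 0 < |1 - α| := abs_pos.mpr h1a
  refine ⟨|1 - α| * K * D / 2, by positivity, ?_⟩
  intro n n₁ n₂ hsum hn hn₁
  have hnR : (n:ℝ) ≠ 0 := Int.cast_ne_zero.mpr hn
  have hnpos : 0 < |(n:ℝ)| := abs_pos.mpr hnR
  have hn₂ : (n₂:ℝ) = (n:ℝ) - (n₁:ℝ) := by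
    have : n₂ = n - n₁ := by omega
    rw [this]; push_cast; ring
  have key : α * (n:ℝ) ^ 3 - (n₁:ℝ) ^ 3 - α * (n₂:ℝ) ^ 3 =
      (α - 1) * (n₁:ℝ) * ((n₁:ℝ) - d₁ * n) * ((n₁:ℝ) - d₂ * n) := by
    rw [hn₂]
    linear_combination (-((n:ℝ) * (n₁:ℝ) ^ 2)) * hsum2 + ((n:ℝ) ^ 2 * (n₁:ℝ)) * hprodb
  rw [key]
  set x : ℝ := (n₁:ℝ) / (n:ℝ) with hx
  have hfac : ∀ d : ℝ, |((n₁:ℝ) - d * n)| = |(n:ℝ)| * |d - x| := by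
    intro d
    have hxd : (n:ℝ) * (x - d) = (n₁:ℝ) - d * n := by
      rw [hx]; field_simp
    rw [← hxd, abs_mul, abs_sub_comm x d]
  have habs : |(α - 1) * (n₁:ℝ) * ((n₁:ℝ) - d₁ * n) * ((n₁:ℝ) - d₂ * n)| =
      |1 - α| * |(n₁:ℝ)| * (|(n:ℝ)| * |d₁ - x|) * (|(n:ℝ)| * |d₂ - x|) := by
    rw [abs_mul, abs_mul, abs_mul, hfac, hfac, abs_sub_comm α 1]
  rw [habs]
  have ht1 : K / |(n:ℝ)| ^ (2 + ν) ≤ |d₁ - x| := htype₁ n₁ n hn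
  have ht2 : K / |(n:ℝ)| ^ (2 + ν) ≤ |d₂ - x| := htype₂ n₁ n hn
  have hpow : |(n:ℝ)| * |(n:ℝ)| * |(n:ℝ)| ^ (-(2 + ν)) = |(n:ℝ)| ^ (-ν) := by
    rw [show (-ν) = 2 + -(2 + ν) by ring, Real.rpow_add hnpos, Real.rpow_two]; ring
  have hKdiv : K / |(n:ℝ)| ^ (2 + ν) = K * |(n:ℝ)| ^ (-(2 + ν)) := by
    rw [Real.rpow_neg hnpos.le, div_eq_mul_inv]
  set KP := K * |(n:ℝ)| ^ (-(2 + ν)) with hKP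
  have hKPpos : 0 < KP := by rw [hKP]; positivity
  have hb1 : KP ≤ |d₁ - x| := hKdiv ▸ ht1
  have hb2 : KP ≤ |d₂ - x| := hKdiv ▸ ht2
  have hsep : D / 2 ≤ |d₁ - x| ∨ D / 2 ≤ |d₂ - x| := by
    rcases le_or_gt (D / 2) |d₁ - x| with h | h
    · exact Or.inl h
    · right
      have h3 := abs_sub_abs_le_abs_sub (d₁ - d₂) (d₁ - x)
      have h2 : |(d₁ - d₂) - (d₁ - x)| = |d₂ - x| := by
        rw [abs_sub_comm]; congr 1; ring
      rw [h2] at h3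
      have : D - |d₁ - x| ≤ |d₂ - x| := by
        calc D - |d₁ - x| ≤ |d₁ - d₂| - |d₁ - x| := by rw [hD]
          _ ≤ |d₂ - x| := by linarith
      linarith
  rcases hsep with h | h
  · have heq : |1 - α| * K * D / 2 * |(n₁:ℝ)| * |(n:ℝ)| ^ (-ν)
        = |1 - α| * |(n₁:ℝ)| * (|(n:ℝ)| * (D / 2)) * (|(n:ℝ)| * KP) := by
      rw [← hpow, hKP]; ring
    rw [heq]
    refine mul_le_mul (mul_le_mul_of_nonneg_left ?_ (by positivity)) ?_ (by positivity) (by positivity)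
    · exact mul_le_mul_of_nonneg_left h hnpos.le
    · exact mul_le_mul_of_nonneg_left hb2 hnpos.le
  · have heq : |1 - α| * K * D / 2 * |(n₁:ℝ)| * |(n:ℝ)| ^ (-ν)
        = |1 - α| * |(n₁:ℝ)| * (|(n:ℝ)| * KP) * (|(n:ℝ)| * (D / 2)) := by
      rw [← hpow, hKP]; ring
    rw [heq]
    refine mul_le_mul (mul_le_mul_of_nonneg_left ?_ (by positivity)) ?_ (by positivity) (by positivity)
    · exact mul_le_mul_of_nonneg_left hb1 hnpos.le
    · exact mul_le_mul_of_nonneg_left h hnpos.le
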